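/- Let C be an n×n correlation matrix. Then rank(C ∘ conj(C)) · N(C) ≥ n², where N(C) is the number of nonzero entries of C. -/

import Mathlib

open scoped ComplexOrder

open Matrix

/-- trace of a Hermitian complex matrix is the sum of eigenvalues. -/
lemma my_trace_eq {m : ℕ} {M : Matrix (Fin m) (Fin m) ℂ} (hM : M.IsHermitian) :
    M.trace = ∑ i, (hM.eigenvalues i : ℂ) := by
  conv_lhs => rw [hM.spectral_theorem, Unitary.conjStarAlgAut_apply]
  rw [Matrix.trace_mul_cycle, Unitary.coe_star_mul_self, Matrix.one_mul, Matrix.trace_diagonal]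
  rfl

lemma my_trace_sq_eq {m : ℕ} {M : Matrix (Fin m) (Fin m) ℂ} (hM : M.IsHermitian) :
    (M * M).trace = ∑ i, (hM.eigenvalues i : ℂ) ^ 2 := by
  have hU : (star (hM.eigenvectorUnitary : Matrix (Fin m) (Fin m) ℂ)) *
      (hM.eigenvectorUnitary : Matrix (Fin m) (Fin m) ℂ) = 1 := Unitary.coe_star_mul_self _
  conv_lhs => rw [hM.spectral_theorem, Unitary.conjStarAlgAut_apply]
  rw [show ((hM.eigenvectorUnitary : Matrix (Fin m) (Fin m) ℂ) *
      diagonal (RCLike.ofReal ∘ hM.eigenvalues) * (star (hM.eigenvectorUnitary : Matrix (Fin m) (Fin m) ℂ))) *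
      ((hM.eigenvectorUnitary : Matrix (Fin m) (Fin m) ℂ) *
      diagonal (RCLike.ofReal ∘ hM.eigenvalues) * (star (hM.eigenvectorUnitary : Matrix (Fin m) (Fin m) ℂ))) =
      (hM.eigenvectorUnitary : Matrix (Fin m) (Fin m) ℂ) *
      (diagonal (RCLike.ofReal ∘ hM.eigenvalues) * diagonal (RCLike.ofReal ∘ hM.eigenvalues)) *
      (star (hM.eigenvectorUnitary : Matrix (Fin m) (Fin m) ℂ)) by
    simp only [Matrix.mul_assoc]
    rw [← Matrix.mul_assoc (star _) _ _, hU, Matrix.one_mul]]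
  rw [Matrix.trace_mul_cycle, hU, Matrix.one_mul,
    Matrix.diagonal_mul_diagonal, Matrix.trace_diagonal]
  simp [sq]

/-- For an `n × n` correlation matrix `C`, `rank(C ∘ conj C) · N(C) ≥ n²`, where
`N(C)` is the number of nonzero entries of `C`. -/
theorem rank_hadamard_conj_mul_card_nonzero {n : ℕ} (C : Matrix (Fin n) (Fin n) ℂ)
    (hC : C.PosSemidef) (hdiag : ∀ i, C i i = 1) :
    n ^ 2 ≤ (C ⊙ C.map (starRingEnd ℂ)).rank *
      (Finset.univ.filter (fun q : Fin n × Fin n => C q.1 q.2 ≠ 0)).card := by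
  classical
  set M : Matrix (Fin n) (Fin n) ℂ := C ⊙ C.map (starRingEnd ℂ) with hMdef
  have hCH : ∀ i j, C j i = (starRingEnd ℂ) (C i j) := by
    intro i j
    exact (hC.isHermitian.apply j i).symm
  have hMentry : ∀ i j, M i j = (Complex.normSq (C i j) : ℂ) := by
    intro i j
    simp [hMdef, Matrix.hadamard_apply, Matrix.map_apply, Complex.normSq_eq_conj_mul_self,
      mul_comm]
  -- M is Hermitian
  have hM : M.IsHermitian := by
    ext i j
    simp only [Matrix.conjTranspose_apply, hMentry]
    rw [hCH i j]
    simp [Complex.normSq_conj]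
  -- abs bound: |C i j|² ≤ 1
  have habs : ∀ i j, Complex.normSq (C i j) ≤ 1 := by
    intro i j
    rcases eq_or_ne i j with rfl | hij
    · simp [hdiag i]
    · -- test vector x = -C i j • e_i + e_j
      set x : Fin n → ℂ := fun k => if k = i then -C i j else if k = j then 1 else 0 with hx
      have h0 := hC.re_dotProduct_nonneg x
      have : dotProduct (star x) (C *ᵥ x) =
          (1 - Complex.normSq (C i j) : ℝ) := by
        simp only [dotProduct, Matrix.mulVec, Pi.star_apply, hx]
        rw [Finset.sum_eq_add_of_mem i j (Finset.mem_univ i) (Finset.mem_univ j) hij ?_]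
        · simp only [if_pos rfl, if_neg hij, if_neg (Ne.symm hij)]
          rw [Finset.sum_eq_add_of_mem i j (Finset.mem_univ i) (Finset.mem_univ j) hij ?_,
            Finset.sum_eq_add_of_mem i j (Finset.mem_univ i) (Finset.mem_univ j) hij ?_]
          · simp only [if_pos rfl, if_neg hij, if_neg (Ne.symm hij)]
            rw [hdiag i, hdiag j, hCH i j]
            push_cast
            rw [Complex.normSq_eq_conj_mul_self]
            simp only [if_true, star_one, star_neg, star_zero]
            ring
          · intro k hk ⟨hki, hkj⟩
            simp [if_neg hki, if_neg hkj]
          · intro k hk ⟨hki, hkj⟩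
            simp [if_neg hki, if_neg hkj]
        · intro k hk ⟨hki, hkj⟩
          simp [if_neg hki, if_neg hkj]
      rw [this] at h0
      simpa using sub_nonneg.mp (by exact_mod_cast h0)
  set lam := hM.eigenvalues with hlam
  -- trace identities
  have htr : ∑ i, lam i = (n : ℝ) := by
    have h1 : M.trace = (n : ℂ) := by
      simp only [Matrix.trace, Matrix.diag, hMentry]
      simp [hdiag]
    have h2 := my_trace_eq hM
    rw [h1] at h2
    exact_mod_cast h2.symm
  have htr2 : ∑ i, (lam i) ^ 2 = ∑ i, ∑ j, Complex.normSq (C i j) * Complex.normSq (C j i) := by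
    have h1 : (M * M).trace = ((∑ i, ∑ j, Complex.normSq (C i j) * Complex.normSq (C j i) : ℝ) : ℂ) := by
      simp only [Matrix.trace, Matrix.diag, Matrix.mul_apply, hMentry]
      push_cast
      rfl
    have h2 := my_trace_sq_eq hM
    rw [h1] at h2
    exact_mod_cast h2.symm
  -- bound sum of squares by card of nonzero entries
  set N := (Finset.univ.filter (fun q : Fin n × Fin n => C q.1 q.2 ≠ 0)).card with hN
  have hsum_le : ∑ i, (lam i) ^ 2 ≤ (N : ℝ) := by
    rw [htr2, ← Finset.sum_product', Finset.univ_product_univ,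
      ← Finset.sum_filter_of_ne (p := fun q : Fin n × Fin n => C q.1 q.2 ≠ 0)
        (fun q _ hq h0 => hq (by simp [h0]))]
    calc ∑ q ∈ (Finset.univ.filter (fun q : Fin n × Fin n => C q.1 q.2 ≠ 0)),
          Complex.normSq (C q.1 q.2) * Complex.normSq (C q.2 q.1)
        ≤ ∑ _q ∈ (Finset.univ.filter (fun q : Fin n × Fin n => C q.1 q.2 ≠ 0)), (1 : ℝ) := by
          apply Finset.sum_le_sum
          intro q _
          have h1 := habs q.1 q.2
          have h2 := habs q.2 q.1
          have h3 : (0:ℝ) ≤ Complex.normSq (C q.1 q.2) := Complex.normSq_nonneg _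
          have h4 : (0:ℝ) ≤ Complex.normSq (C q.2 q.1) := Complex.normSq_nonneg _
          nlinarith
      _ = (N : ℝ) := by simp [hN]
  -- rank = number of nonzero eigenvalues
  set s := Finset.univ.filter (fun i => lam i ≠ 0) with hs
  have hrank : M.rank = s.card := by
    rw [hM.rank_eq_card_non_zero_eigs]
    simp [hs, Fintype.card_subtype]
    rfl
  -- Cauchy–Schwarz
  have hcs : (n : ℝ) ^ 2 ≤ (s.card : ℝ) * ∑ i ∈ s, (lam i) ^ 2 := by
    have := sq_sum_le_card_mul_sum_sq (s := s) (f := lam)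
    rwa [Finset.sum_filter_ne_zero, htr] at this
  have hsq_le : ∑ i ∈ s, (lam i) ^ 2 ≤ (N : ℝ) := by
    refine le_trans ?_ hsum_le
    apply Finset.sum_le_sum_of_subset_of_nonneg (Finset.filter_subset _ _)
    intro i _ _
    positivity
  have final : (n : ℝ) ^ 2 ≤ (M.rank : ℝ) * (N : ℝ) := by
    rw [hrank]
    calc (n:ℝ)^2 ≤ (s.card : ℝ) * ∑ i ∈ s, (lam i) ^ 2 := hcs
      _ ≤ (s.card : ℝ) * (N : ℝ) := by
          apply mul_le_mul_of_nonneg_left hsq_le (Nat.cast_nonneg _)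
  exact_mod_cast final
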